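/- Let a>0, b>0, N≤3, and for C>0 let t(C) be the unique positive root of a t² + b C t^{4-N} = 1. Then t(C) · (b C)^{1/(4-N)} → 1 as C → +∞; equivalently, t(C) is asymptotic to (1/(bC))^{1/(4-N)} as C → +∞. -/
import Mathlib

open Filter Real

theorem stmt_4 (a b : ℝ) (N : ℕ) (ha : 0 < a) (hb : 0 < b)
    (hN1 : 1 ≤ N) (hN3 : N ≤ 3) (T : ℝ → ℝ)
    (hT : ∀ C > (0:ℝ), 0 < T C ∧ a * (T C) ^ 2 + b * C * (T C) ^ (4 - N) = 1) :
    Filter.Tendsto (fun C : ℝ => T C * (b * C) ^ ((1:ℝ) / (4 - (N:ℝ))))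
      Filter.atTop (nhds 1) := by
  set m : ℕ := 4 - N with hm
  have hm1 : 1 ≤ m := by omega
  have hmR : (4:ℝ) - (N:ℝ) = (m : ℝ) := by
    rw [hm, Nat.cast_sub (by omega : N ≤ 4)]; norm_num
  have hm0 : ((m:ℝ)) ≠ 0 := by positivity
  have hmpos : (0:ℝ) < (m:ℝ) := by positivity
  simp only [hmR]
  -- key identity
  have key : ∀ C > (0:ℝ), T C * (b * C) ^ ((1:ℝ) / (m:ℝ))
      = (1 - a * (T C) ^ 2) ^ ((1:ℝ) / (m:ℝ)) := by
    intro C hC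
    obtain ⟨hTpos, heq⟩ := hT C hC
    have hbC : (0:ℝ) < b * C := by positivity
    have h1 : (T C) ^ m * (b * C) = 1 - a * (T C) ^ 2 := by linear_combination heq
    have h2 : ((T C) ^ m) ^ ((1:ℝ) / (m:ℝ)) = T C := by
      rw [← Real.rpow_natCast (T C) m, ← Real.rpow_mul hTpos.le,
        mul_one_div, div_self hm0, Real.rpow_one]
    conv_lhs => rw [← h2, ← Real.mul_rpow (by positivity) hbC.le, h1]
  -- T tends to 0
  have hT0 : Tendsto T atTop (nhds 0) := by
    have hub : ∀ᶠ C in atTop, T C ≤ (b * C) ^ (-((1:ℝ) / (m:ℝ))) := by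
      filter_upwards [eventually_gt_atTop 0] with C hC
      obtain ⟨hTpos, heq⟩ := hT C hC
      have hbC : (0:ℝ) < b * C := by positivity
      have h1 : (T C) ^ m ≤ (b * C)⁻¹ := by
        rw [inv_eq_one_div, le_div_iff₀ hbC]
        nlinarith [mul_nonneg ha.le (sq_nonneg (T C))]
      have h2 : ((T C) ^ m) ^ ((1:ℝ) / (m:ℝ)) = T C := by
        rw [← Real.rpow_natCast (T C) m, ← Real.rpow_mul hTpos.le,
          mul_one_div, div_self hm0, Real.rpow_one]
      calc T C = ((T C) ^ m) ^ ((1:ℝ) / (m:ℝ)) := h2.symm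
        _ ≤ ((b * C)⁻¹) ^ ((1:ℝ) / (m:ℝ)) :=
            Real.rpow_le_rpow (by positivity) h1 (by positivity)
        _ = (b * C) ^ (-((1:ℝ) / (m:ℝ))) := by
            rw [Real.inv_rpow hbC.le, ← Real.rpow_neg hbC.le]
    have hlb : ∀ᶠ C in atTop, 0 ≤ T C := by
      filter_upwards [eventually_gt_atTop 0] with C hC
      exact (hT C hC).1.le
    have hub0 : Tendsto (fun C : ℝ => (b * C) ^ (-((1:ℝ) / (m:ℝ)))) atTop (nhds 0) :=
      (tendsto_rpow_neg_atTop (by positivity : (0:ℝ) < 1 / (m:ℝ))).comp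
        (Filter.Tendsto.const_mul_atTop hb tendsto_id)
    exact tendsto_of_tendsto_of_tendsto_of_le_of_le' tendsto_const_nhds hub0 hlb hub
  -- conclude
  have h3 : Tendsto (fun C => 1 - a * (T C) ^ 2) atTop (nhds 1) := by
    have : Tendsto (fun C => a * (T C) ^ 2) atTop (nhds (a * 0 ^ 2)) :=
      tendsto_const_nhds.mul (hT0.pow 2)
    have h := Filter.Tendsto.sub (tendsto_const_nhds (x := (1:ℝ))) this
    simpa using h
  have h4 : Tendsto (fun C => (1 - a * (T C) ^ 2) ^ ((1:ℝ)/(m:ℝ))) atTop (nhds 1) := by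
    have := h3.rpow_const (p := (1:ℝ)/(m:ℝ)) (Or.inr (by positivity))
    simpa using this
  refine h4.congr' ?_
  filter_upwards [eventually_gt_atTop 0] with C hC
  exact (key C hC).symm
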